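/- For the card game SET parameters p = 3, r = 3 and n = 10 points in F_3^d with q = 3^d: the ratio F(2,10)/F(0,10) of the second moment to the count equals 120(q^2 + 89q − 540)/((q−5)(q−4)(q−2)), where F(m,n) = ∑_{|S|=n} a(S)^m and a(S) counts 3-subsets of S summing to zero. In particular F(2,10) vanishes at q = 1, 3, 9. -/

import Mathlib

open Finset

/-- `a(S)`: the number of `3`-element subsets of `S ⊆ 𝔽_3^d` summing to zero
(the number of "SETs" contained in `S`). -/
def aCount (p d r : ℕ) (S : Finset (Fin d → ZMod p)) : ℕ :=
  ((S.powersetCard r).filter fun T => ∑ x ∈ T, x = 0).card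

/-- The moment `F(m,n) = ∑_{|S|=n} a(S)^m` over subsets of `𝔽_p^d`. -/
def Fmom (p : ℕ) [NeZero p] (d r m n : ℕ) : ℕ :=
  ∑ S ∈ (Finset.univ : Finset (Fin d → ZMod p)).powersetCard n, (aCount p d r S) ^ m

variable {d : ℕ}

abbrev Vd (d : ℕ) := Fin d → ZMod 3

lemma three_smul_zero (v : Vd d) : v + v + v = 0 := by
  funext i
  have : ∀ a : ZMod 3, a + a + a = 0 := by decide
  simpa using this (v i)

/-- the finset of lines (sum-zero triples) -/
def Ld (d : ℕ) : Finset (Finset (Vd d)) :=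
  (Finset.univ.powersetCard 3).filter fun T => ∑ x ∈ T, x = 0

lemma mem_Ld {T : Finset (Vd d)} : T ∈ Ld d ↔ T.card = 3 ∧ ∑ x ∈ T, x = 0 := by
  simp [Ld, Finset.mem_powersetCard, and_comm]

lemma line_eq {T : Finset (Vd d)} (hT : T ∈ Ld d) {a b : Vd d}
    (ha : a ∈ T) (hb : b ∈ T) (hab : a ≠ b) : T = {a, b, -a - b} := by
  obtain ⟨hcard, hsum⟩ := mem_Ld.1 hT
  have hsub : ({a, b} : Finset (Vd d)) ⊆ T := by
    intro x hx; rcases Finset.mem_insert.1 hx with rfl | hx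
    · exact ha
    · rwa [Finset.mem_singleton.1 hx]
  have h1 : (T \ {a, b}).card = 1 := by
    rw [Finset.card_sdiff_of_subset hsub, Finset.card_pair hab, hcard]
  obtain ⟨c, hc⟩ := Finset.card_eq_one.1 h1
  have hcT : c ∈ T \ ({a, b} : Finset (Vd d)) := hc ▸ Finset.mem_singleton_self c
  have hca : c ≠ a := by rintro rfl; simp at hcT
  have hcb : c ≠ b := by rintro rfl; simp at hcT
  have hTeq : T = insert a (insert b {c}) := by
    have h2 := Finset.sdiff_union_of_subset hsub
    rw [hc] at h2
    rw [← h2]; ext x; simp; tauto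
  have hs2 : a + (b + c) = 0 := by
    rw [hTeq] at hsum
    rwa [Finset.sum_insert (by simp [hab, hca.symm]),
      Finset.sum_insert (by simp [hcb.symm]), Finset.sum_singleton] at hsum
  have : c = -a - b := by linear_combination hs2
  rw [hTeq, this]

lemma line_mk {x y : Vd d} (h : x ≠ y) :
    ({x, y, -x - y} : Finset (Vd d)) ∈ Ld d := by
  have h1 : -x - y ≠ x := by
    intro e; apply h; linear_combination e + three_smul_zero x
  have h2 : -x - y ≠ y := by
    intro e; apply h; linear_combination -e - three_smul_zero y
  refine mem_Ld.2 ⟨?_, ?_⟩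
  · rw [Finset.card_insert_of_notMem (by simp [h, h1.symm]),
      Finset.card_insert_of_notMem (by simp [h2.symm]), Finset.card_singleton]
  · rw [Finset.sum_insert (by simp [h, h1.symm]),
      Finset.sum_insert (by simp [h2.symm]), Finset.sum_singleton]
    ring

lemma card_Ld (d : ℕ) :
    (Ld d).card * 6 = Fintype.card (Vd d) * Fintype.card (Vd d) - Fintype.card (Vd d) := by
  classical
  have key := Finset.card_eq_sum_card_fiberwise
    (f := fun p : Vd d × Vd d => ({p.1, p.2, -p.1 - p.2} : Finset (Vd d)))
    (s := (Finset.univ : Finset (Vd d)).offDiag) (t := Ld d)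
    (fun p hp => line_mk (Finset.mem_offDiag.1 hp).2.2)
  have hfib : ∀ T ∈ Ld d,
      ((Finset.univ : Finset (Vd d)).offDiag.filter
        (fun p => ({p.1, p.2, -p.1 - p.2} : Finset (Vd d)) = T)) = T.offDiag := by
    intro T hT
    ext p
    simp only [Finset.mem_filter, Finset.mem_offDiag, Finset.mem_univ, true_and]
    constructor
    · rintro ⟨hne, rfl⟩
      exact ⟨by simp, by simp, hne⟩
    · rintro ⟨h1, h2, hne⟩
      exact ⟨hne, (line_eq hT h1 h2 hne).symm⟩
  rw [Finset.sum_congr rfl (fun T hT => by rw [hfib T hT])] at key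
  have : ∀ T ∈ Ld d, T.offDiag.card = 6 := by
    intro T hT
    rw [Finset.offDiag_card, (mem_Ld.1 hT).1]
  rw [Finset.sum_congr rfl this, Finset.sum_const, smul_eq_mul, Finset.offDiag_card,
    Finset.card_univ] at key
  omega

lemma card_lines_through (x : Vd d) :
    ((Ld d).filter (fun T => x ∈ T)).card * 2 = Fintype.card (Vd d) - 1 := by
  classical
  have key := Finset.card_eq_sum_card_fiberwise
    (f := fun y : Vd d => ({x, y, -x - y} : Finset (Vd d)))
    (s := (Finset.univ : Finset (Vd d)).erase x) (t := (Ld d).filter (fun T => x ∈ T))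
    (fun y hy => by
      have hxy : x ≠ y := fun e => (Finset.mem_erase.1 hy).1 e.symm
      exact Finset.mem_filter.2 ⟨line_mk hxy, by simp⟩)
  have hfib : ∀ T ∈ (Ld d).filter (fun T => x ∈ T),
      (((Finset.univ : Finset (Vd d)).erase x).filter
        (fun y => ({x, y, -x - y} : Finset (Vd d)) = T)) = T.erase x := by
    intro T hT
    obtain ⟨hTL, hxT⟩ := Finset.mem_filter.1 hT
    ext y
    simp only [Finset.mem_filter, Finset.mem_erase, Finset.mem_univ, and_true, true_and]
    constructor
    · rintro ⟨hne, rfl⟩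
      exact ⟨hne, by simp⟩
    · rintro ⟨hne, hyT⟩
      exact ⟨hne, (line_eq hTL hxT hyT (fun e => hne e.symm)).symm⟩
  rw [Finset.sum_congr rfl (fun T hT => by rw [hfib T hT])] at key
  have : ∀ T ∈ (Ld d).filter (fun T => x ∈ T), (T.erase x).card = 2 := by
    intro T hT
    obtain ⟨hTL, hxT⟩ := Finset.mem_filter.1 hT
    rw [Finset.card_erase_of_mem hxT, (mem_Ld.1 hTL).1]
  rw [Finset.sum_congr rfl this, Finset.sum_const, smul_eq_mul,
    Finset.card_erase_of_mem (Finset.mem_univ x), Finset.card_univ] at key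
  omega

lemma inter_card_le {T1 T2 : Finset (Vd d)} (h1 : T1 ∈ Ld d) (h2 : T2 ∈ Ld d)
    (hne : T1 ≠ T2) : (T1 ∩ T2).card ≤ 1 := by
  by_contra h
  obtain ⟨a, ha, b, hb, hab⟩ := Finset.one_lt_card.1 (not_le.1 h)
  apply hne
  rw [line_eq h1 (Finset.mem_inter.1 ha).1 (Finset.mem_inter.1 hb).1 hab,
    line_eq h2 (Finset.mem_inter.1 ha).2 (Finset.mem_inter.1 hb).2 hab]

/-- number of ordered pairs of distinct intersecting lines -/
def P1c (d : ℕ) : ℕ :=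
  ∑ T1 ∈ Ld d, (((Ld d).erase T1).filter fun T2 => (T1 ∩ T2).Nonempty).card
/-- number of ordered pairs of distinct disjoint lines -/
def P0c (d : ℕ) : ℕ :=
  ∑ T1 ∈ Ld d, (((Ld d).erase T1).filter fun T2 => ¬ (T1 ∩ T2).Nonempty).card

lemma aCount_eq (S : Finset (Vd d)) :
    aCount 3 d 3 S = ((Ld d).filter fun T => T ⊆ S).card := by
  unfold aCount
  congr 1
  ext T
  simp only [Finset.mem_filter, Finset.mem_powersetCard, mem_Ld]
  tauto

lemma P_split : P1c d + P0c d = (Ld d).card * ((Ld d).card - 1) := by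
  rw [P1c, P0c, ← Finset.sum_add_distrib]
  rw [Finset.sum_congr rfl (fun T1 hT1 => by
    rw [Finset.card_filter_add_card_filter_not, Finset.card_erase_of_mem hT1])]
  rw [Finset.sum_const, smul_eq_mul]

lemma inter_sum :
    P1c d + 3 * (Ld d).card
      = ∑ x : Vd d, (((Ld d).filter fun T => x ∈ T).card) ^ 2 := by
  classical
  have key : ∑ T1 ∈ Ld d, ∑ T2 ∈ Ld d, (T1 ∩ T2).card
      = 3 * (Ld d).card + P1c d := by
    rw [Finset.sum_congr rfl (fun T1 hT1 => (Finset.add_sum_erase _ _ hT1).symm),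
      Finset.sum_add_distrib]
    congr 1
    · rw [Finset.sum_congr rfl (fun T1 hT1 => by
        rw [Finset.inter_self, (mem_Ld.1 hT1).1]), Finset.sum_const, smul_eq_mul, mul_comm]
    · rw [P1c]
      refine Finset.sum_congr rfl fun T1 hT1 => ?_
      rw [Finset.card_filter]
      refine Finset.sum_congr rfl fun T2 hT2 => ?_
      obtain ⟨hne, hT2L⟩ := Finset.mem_erase.1 hT2
      by_cases hI : (T1 ∩ T2).Nonempty
      · rw [if_pos hI]
        exact le_antisymm (inter_card_le hT1 hT2L (fun e => hne e.symm)) hI.card_pos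
      · rw [if_neg hI, Finset.card_eq_zero.2 (Finset.not_nonempty_iff_eq_empty.1 hI)]
  symm
  have expand : ∀ T1 T2 : Finset (Vd d), (T1 ∩ T2).card
      = ∑ x : Vd d, (if x ∈ T1 then 1 else 0) * (if x ∈ T2 then 1 else 0) := by
    intro T1 T2
    have h1 : T1 ∩ T2 = Finset.univ.filter fun x => x ∈ T1 ∧ x ∈ T2 := by ext x; simp
    rw [h1, Finset.card_filter]
    refine Finset.sum_congr rfl fun x _ => ?_
    by_cases h1 : x ∈ T1 <;> by_cases h2 : x ∈ T2 <;> simp [h1, h2]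
  calc ∑ x : Vd d, (((Ld d).filter fun T => x ∈ T).card) ^ 2
      = ∑ x : Vd d, (∑ T1 ∈ Ld d, if x ∈ T1 then 1 else 0)
          * (∑ T2 ∈ Ld d, if x ∈ T2 then 1 else 0) := by
        refine Finset.sum_congr rfl fun x _ => ?_
        rw [sq, Finset.card_filter]
    _ = ∑ x : Vd d, ∑ T1 ∈ Ld d, ∑ T2 ∈ Ld d,
          (if x ∈ T1 then 1 else 0) * (if x ∈ T2 then 1 else 0) := by
        refine Finset.sum_congr rfl fun x _ => ?_
        rw [Finset.sum_mul_sum]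
    _ = ∑ T1 ∈ Ld d, ∑ T2 ∈ Ld d, ∑ x : Vd d,
          (if x ∈ T1 then 1 else 0) * (if x ∈ T2 then 1 else 0) := by
        rw [Finset.sum_comm]
        refine Finset.sum_congr rfl fun T1 _ => ?_
        rw [Finset.sum_comm]
    _ = ∑ T1 ∈ Ld d, ∑ T2 ∈ Ld d, (T1 ∩ T2).card := by
        refine Finset.sum_congr rfl fun T1 _ => Finset.sum_congr rfl fun T2 _ => ?_
        rw [expand]
    _ = P1c d + 3 * (Ld d).card := by rw [key, add_comm]

lemma count_supersets {A : Finset (Vd d)} (hA : A.card ≤ 10) :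
    (((Finset.univ : Finset (Vd d)).powersetCard 10).filter fun S => A ⊆ S).card
      = (Fintype.card (Vd d) - A.card).choose (10 - A.card) := by
  classical
  have hbij : (((Finset.univ : Finset (Vd d)).powersetCard 10).filter fun S => A ⊆ S).card
      = (((Finset.univ : Finset (Vd d)) \ A).powersetCard (10 - A.card)).card := by
    refine Finset.card_bij' (fun S _ => S \ A) (fun S' _ => S' ∪ A) ?_ ?_ ?_ ?_
    · intro S hS
      obtain ⟨hP, hAS⟩ := Finset.mem_filter.1 hS
      obtain ⟨hSu, hScard⟩ := Finset.mem_powersetCard.1 hP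
      exact Finset.mem_powersetCard.2
        ⟨Finset.sdiff_subset_sdiff hSu (by rfl), by rw [Finset.card_sdiff_of_subset hAS, hScard]⟩
    · intro S' hS'
      obtain ⟨hSu, hScard⟩ := Finset.mem_powersetCard.1 hS'
      have hdisj : Disjoint S' A :=
        Finset.disjoint_left.2 fun x hx => (Finset.mem_sdiff.1 (hSu hx)).2
      refine Finset.mem_filter.2 ⟨Finset.mem_powersetCard.2 ⟨Finset.subset_univ _, ?_⟩,
        Finset.subset_union_right⟩
      rw [Finset.card_union_of_disjoint hdisj, hScard]
      omega
    · intro S hS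
      exact Finset.sdiff_union_of_subset (Finset.mem_filter.1 hS).2
    · intro S' hS'
      obtain ⟨hSu, _⟩ := Finset.mem_powersetCard.1 hS'
      have hdisj : Disjoint S' A :=
        Finset.disjoint_left.2 fun x hx => (Finset.mem_sdiff.1 (hSu hx)).2
      show (S' ∪ A) \ A = S'
      rw [Finset.union_sdiff_right, Finset.sdiff_eq_self_of_disjoint hdisj]
  rw [hbij, Finset.card_powersetCard, Finset.card_sdiff_of_subset (Finset.subset_univ A),
    Finset.card_univ]

lemma Fmom_eq :
    Fmom 3 d 3 2 10 = ∑ T1 ∈ Ld d, ∑ T2 ∈ Ld d,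
      (Fintype.card (Vd d) - (T1 ∪ T2).card).choose (10 - (T1 ∪ T2).card) := by
  classical
  unfold Fmom
  have step1 : ∀ S ∈ (Finset.univ : Finset (Vd d)).powersetCard 10,
      aCount 3 d 3 S ^ 2 = ∑ T1 ∈ Ld d, ∑ T2 ∈ Ld d,
        (if T1 ∪ T2 ⊆ S then 1 else 0) := by
    intro S _
    rw [aCount_eq, sq, Finset.card_filter, Finset.sum_mul_sum]
    refine Finset.sum_congr rfl fun T1 _ => Finset.sum_congr rfl fun T2 _ => ?_
    by_cases h1 : T1 ⊆ S <;> by_cases h2 : T2 ⊆ S <;>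
      simp [Finset.union_subset_iff, h1, h2]
  rw [Finset.sum_congr rfl step1, Finset.sum_comm]
  refine Finset.sum_congr rfl fun T1 hT1 => ?_
  rw [Finset.sum_comm]
  refine Finset.sum_congr rfl fun T2 hT2 => ?_
  rw [← Finset.card_filter]
  have hcard : (T1 ∪ T2).card ≤ 10 := by
    have := Finset.card_union_le T1 T2
    rw [(mem_Ld.1 hT1).1, (mem_Ld.1 hT2).1] at this
    omega
  exact count_supersets hcard

lemma Fmom_split (d : ℕ) :
    Fmom 3 d 3 2 10
      = (Ld d).card * (Fintype.card (Vd d) - 3).choose 7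
        + P1c d * (Fintype.card (Vd d) - 5).choose 5
        + P0c d * (Fintype.card (Vd d) - 6).choose 4 := by
  classical
  set q := Fintype.card (Vd d) with hq
  rw [Fmom_eq]
  have inner : ∀ T1 ∈ Ld d, ∑ T2 ∈ Ld d,
      (q - (T1 ∪ T2).card).choose (10 - (T1 ∪ T2).card)
      = (q - 3).choose 7
        + ((((Ld d).erase T1).filter fun T2 => (T1 ∩ T2).Nonempty).card * (q - 5).choose 5
          + (((Ld d).erase T1).filter fun T2 => ¬ (T1 ∩ T2).Nonempty).card * (q - 6).choose 4) := by
    intro T1 hT1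
    rw [← Finset.add_sum_erase _ _ hT1]
    congr 1
    · rw [Finset.union_self, (mem_Ld.1 hT1).1]
    · have hterm : ∀ T2 ∈ (Ld d).erase T1,
          (q - (T1 ∪ T2).card).choose (10 - (T1 ∪ T2).card)
          = if (T1 ∩ T2).Nonempty then (q - 5).choose 5 else (q - 6).choose 4 := by
        intro T2 hT2
        obtain ⟨hne, hT2L⟩ := Finset.mem_erase.1 hT2
        have hsum : (T1 ∪ T2).card + (T1 ∩ T2).card = 6 := by
          rw [Finset.card_union_add_card_inter, (mem_Ld.1 hT1).1, (mem_Ld.1 hT2L).1]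
        by_cases hI : (T1 ∩ T2).Nonempty
        · have h1 : (T1 ∩ T2).card = 1 :=
            le_antisymm (inter_card_le hT1 hT2L (fun e => hne e.symm)) hI.card_pos
          have h5 : (T1 ∪ T2).card = 5 := by omega
          rw [if_pos hI, h5]
        · have h0 : (T1 ∩ T2).card = 0 :=
            Finset.card_eq_zero.2 (Finset.not_nonempty_iff_eq_empty.1 hI)
          have h6 : (T1 ∪ T2).card = 6 := by omega
          rw [if_neg hI, h6]
      rw [Finset.sum_congr rfl hterm, Finset.sum_ite, Finset.sum_const, Finset.sum_const,
        smul_eq_mul, smul_eq_mul]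
  rw [Finset.sum_congr rfl inner, Finset.sum_add_distrib, Finset.sum_add_distrib,
    Finset.sum_const, smul_eq_mul, mul_comm, ← Finset.sum_mul, ← Finset.sum_mul]
  rw [add_assoc]
  rfl


set_option maxHeartbeats 1600000 in
/-- For `p = 3`, `r = 3`, `n = 10` points in `𝔽_3^d` with `q = 3^d`:
`F(2,10)/F(0,10) = 120(q² + 89q − 540)/((q−5)(q−4)(q−2))` (for `d ≥ 3`, i.e. `q ≥ 27`),
and `F(2,10) = 0` for `d ∈ {0,1,2}` (`q = 1, 3, 9`), since there are then no
`10`-element subsets. -/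
theorem second_moment_SET_ten_points :
    (∀ d : ℕ, 3 ≤ d →
      (Fmom 3 d 3 2 10 : ℚ) / ((3 ^ d).choose 10 : ℚ)
        = 120 * (((3 : ℚ) ^ d) ^ 2 + 89 * (3 : ℚ) ^ d - 540)
            / (((3 : ℚ) ^ d - 5) * ((3 : ℚ) ^ d - 4) * ((3 : ℚ) ^ d - 2)))
    ∧ ∀ d : ℕ, d < 3 → Fmom 3 d 3 2 10 = 0 := by
  constructor
  · intro d hd
    have hq27 : 27 ≤ 3 ^ d := by
      calc (27 : ℕ) = 3 ^ 3 := by norm_num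
      _ ≤ 3 ^ d := Nat.pow_le_pow_right (by norm_num) hd
    obtain ⟨m, hm⟩ : ∃ m, 3 ^ d = m + 27 := ⟨3 ^ d - 27, by omega⟩
    have hcard : Fintype.card (Vd d) = m + 27 := by
      rw [Fintype.card_fun]; simpa using hm
    set A : ℚ := ((Ld d).card : ℚ) with hA
    set B : ℚ := (P1c d : ℚ) with hB
    set C : ℚ := (P0c d : ℚ) with hC
    set x : ℚ := (m : ℚ) + 27 with hxdef
    have hx3 : (3 : ℚ) ^ d = x := by
      have h0 : ((3 ^ d : ℕ) : ℚ) = (3 : ℚ) ^ d := by push_cast; ring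
      rw [← h0, hm]; push_cast; rw [hxdef]
    have hm0 : (0 : ℚ) ≤ (m : ℚ) := Nat.cast_nonneg m
    -- count of lines
    have h3 : (Ld d).card * 6 = (m + 27) * (m + 26) := by
      have h := card_Ld d
      rw [hcard] at h
      have e : (m + 27) * (m + 27) = (m + 27) * (m + 26) + (m + 27) := by ring
      omega
    have eA : A * 6 = x * (x - 1) := by
      have h0 := congrArg (Nat.cast (R := ℚ)) h3
      push_cast at h0
      rw [hxdef]; linear_combination h0
    -- second moment of intersections
    have eB : (B + 3 * A) * 4 = x * (x - 1) ^ 2 := by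
      have h0 := congrArg (Nat.cast (R := ℚ)) (inter_sum (d := d))
      push_cast at h0
      have hsq : ∀ v : Vd d,
          ((((Ld d).filter fun T => v ∈ T).card : ℚ)) ^ 2 * 4 = (x - 1) ^ 2 := by
        intro v
        have h1 := card_lines_through v
        rw [hcard, show m + 27 - 1 = m + 26 from by omega] at h1
        have h2 := congrArg (Nat.cast (R := ℚ)) h1
        push_cast at h2
        calc ((((Ld d).filter fun T => v ∈ T).card : ℚ)) ^ 2 * 4
            = (((((Ld d).filter fun T => v ∈ T).card : ℚ)) * 2) ^ 2 := by ring
          _ = ((m : ℚ) + 26) ^ 2 := by rw [h2]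
          _ = (x - 1) ^ 2 := by rw [hxdef]; ring
      calc (B + 3 * A) * 4
          = (∑ v : Vd d, ((((Ld d).filter fun T => v ∈ T).card : ℚ)) ^ 2) * 4 := by
            rw [h0]
        _ = ∑ v : Vd d, ((((Ld d).filter fun T => v ∈ T).card : ℚ)) ^ 2 * 4 := by
            rw [Finset.sum_mul]
        _ = ∑ _v : Vd d, (x - 1) ^ 2 := Finset.sum_congr rfl fun v _ => hsq v
        _ = (Fintype.card (Vd d) : ℚ) * (x - 1) ^ 2 := by
            rw [Finset.sum_const, Finset.card_univ, nsmul_eq_mul]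
        _ = x * (x - 1) ^ 2 := by rw [hcard, hxdef]; push_cast; ring
    -- pair split
    have hNpos : 0 < (Ld d).card := by
      have e : 0 < (m + 27) * (m + 26) := Nat.mul_pos (by omega) (by omega)
      omega
    have eC : B + C = A * A - A := by
      obtain ⟨n0, hn0⟩ : ∃ n0, (Ld d).card = n0 + 1 := ⟨(Ld d).card - 1, by omega⟩
      have h := P_split (d := d)
      rw [hn0, Nat.add_sub_cancel] at h
      have h0 := congrArg (Nat.cast (R := ℚ)) h
      push_cast at h0
      have hA' : A = (n0 : ℚ) + 1 := by rw [hA, hn0]; push_cast; ring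
      rw [hA']; linear_combination h0
    -- choose ratios
    have r3 : ((m + 27).choose 10 : ℚ) * 120
        = ((m + 27).choose 3 : ℚ) * ((m + 24).choose 7 : ℚ) := by
      have h := Nat.choose_mul (n := m + 27) (k := 10) (s := 3) (by omega)
      rw [show m + 27 - 3 = m + 24 from by omega] at h
      norm_num at h
      exact_mod_cast h
    have r5 : ((m + 27).choose 10 : ℚ) * 252
        = ((m + 27).choose 5 : ℚ) * ((m + 22).choose 5 : ℚ) := by
      have h := Nat.choose_mul (n := m + 27) (k := 10) (s := 5) (by omega)
      rw [show m + 27 - 5 = m + 22 from by omega] at h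
      norm_num at h
      exact_mod_cast h
    have r6 : ((m + 27).choose 10 : ℚ) * 210
        = ((m + 27).choose 6 : ℚ) * ((m + 21).choose 4 : ℚ) := by
      have h := Nat.choose_mul (n := m + 27) (k := 10) (s := 6) (by omega)
      rw [show m + 27 - 6 = m + 21 from by omega] at h
      norm_num at h
      exact_mod_cast h
    -- descending factorial values
    have f3 : ((m + 27).choose 3 : ℚ) * 6 = x * (x - 1) * (x - 2) := by
      have h1 : (((m + 27).descFactorial 3 : ℕ) : ℚ) = (m + 27) * (m + 26) * (m + 25) := by
        show (((m + 27 - 2) * ((m + 27 - 1) * ((m + 27 - 0) * 1))) : ℕ) = (_ : ℚ)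
        push_cast [Nat.add_sub_assoc]
        ring
      rw [Nat.descFactorial_eq_factorial_mul_choose, show Nat.factorial 3 = 6 from rfl] at h1
      push_cast at h1
      rw [hxdef]; linear_combination h1
    have f5 : ((m + 27).choose 5 : ℚ) * 120
        = x * (x - 1) * (x - 2) * (x - 3) * (x - 4) := by
      have h1 : (((m + 27).descFactorial 5 : ℕ) : ℚ)
          = (m + 27) * (m + 26) * (m + 25) * (m + 24) * (m + 23) := by
        show (((m + 27 - 4) * ((m + 27 - 3) * ((m + 27 - 2) * ((m + 27 - 1)
          * ((m + 27 - 0) * 1))))) : ℕ) = (_ : ℚ)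
        push_cast [Nat.add_sub_assoc]
        ring
      rw [Nat.descFactorial_eq_factorial_mul_choose, show Nat.factorial 5 = 120 from rfl] at h1
      push_cast at h1
      rw [hxdef]; linear_combination h1
    have f6 : ((m + 27).choose 6 : ℚ) * 720
        = x * (x - 1) * (x - 2) * (x - 3) * (x - 4) * (x - 5) := by
      have h1 : (((m + 27).descFactorial 6 : ℕ) : ℚ)
          = (m + 27) * (m + 26) * (m + 25) * (m + 24) * (m + 23) * (m + 22) := by
        show (((m + 27 - 5) * ((m + 27 - 4) * ((m + 27 - 3) * ((m + 27 - 2) * ((m + 27 - 1)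
          * ((m + 27 - 0) * 1)))))) : ℕ) = (_ : ℚ)
        push_cast [Nat.add_sub_assoc]
        ring
      rw [Nat.descFactorial_eq_factorial_mul_choose, show Nat.factorial 6 = 720 from rfl] at h1
      push_cast at h1
      rw [hxdef]; linear_combination h1
    -- nonvanishing
    have hxpos : ∀ k : ℕ, k ≤ 22 → x - (k : ℚ) ≠ 0 := by
      intro k hk
      have : (k : ℚ) ≤ 22 := by exact_mod_cast hk
      rw [hxdef]; intro h; linarith
    have hx0 : x ≠ 0 := by rw [hxdef]; intro h; linarith
    have hx1 : x - 1 ≠ 0 := hxpos 1 (by norm_num)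
    have hx2 : x - 2 ≠ 0 := hxpos 2 (by norm_num)
    have hx3' : x - 3 ≠ 0 := hxpos 3 (by norm_num)
    have hx4 : x - 4 ≠ 0 := hxpos 4 (by norm_num)
    have hx5 : x - 5 ≠ 0 := hxpos 5 (by norm_num)
    have hc10 : ((m + 27).choose 10 : ℚ) ≠ 0 :=
      Nat.cast_ne_zero.2 (Nat.choose_pos (by omega)).ne'
    -- values of the shifted binomials
    have v7 : ((m + 24).choose 7 : ℚ)
        = 720 * ((m + 27).choose 10 : ℚ) / (x * (x - 1) * (x - 2)) := by
      rw [eq_div_iff (by exact mul_ne_zero (mul_ne_zero hx0 hx1) hx2)]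
      linear_combination (-(((m + 24).choose 7 : ℚ))) * f3 - 6 * r3
    have v5 : ((m + 22).choose 5 : ℚ)
        = 30240 * ((m + 27).choose 10 : ℚ)
          / (x * (x - 1) * (x - 2) * (x - 3) * (x - 4)) := by
      rw [eq_div_iff (by
        exact mul_ne_zero (mul_ne_zero (mul_ne_zero (mul_ne_zero hx0 hx1) hx2) hx3') hx4)]
      linear_combination (-(((m + 22).choose 5 : ℚ))) * f5 - 120 * r5
    have v4 : ((m + 21).choose 4 : ℚ)
        = 151200 * ((m + 27).choose 10 : ℚ)
          / (x * (x - 1) * (x - 2) * (x - 3) * (x - 4) * (x - 5)) := by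
      rw [eq_div_iff (by
        exact mul_ne_zero (mul_ne_zero (mul_ne_zero (mul_ne_zero
          (mul_ne_zero hx0 hx1) hx2) hx3') hx4) hx5)]
      linear_combination (-(((m + 21).choose 4 : ℚ))) * f6 - 720 * r6
    -- the main split, cast to ℚ
    have hsplit := Fmom_split d
    rw [hcard, show m + 27 - 3 = m + 24 from by omega, show m + 27 - 5 = m + 22 from by omega,
      show m + 27 - 6 = m + 21 from by omega] at hsplit
    have hFm : (Fmom 3 d 3 2 10 : ℚ)
        = A * ((m + 24).choose 7 : ℚ) + B * ((m + 22).choose 5 : ℚ)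
          + C * ((m + 21).choose 4 : ℚ) := by
      have h0 := congrArg (Nat.cast (R := ℚ)) hsplit
      push_cast at h0
      exact h0
    -- solve for A, B, C
    have vA : A = x * (x - 1) / 6 := by linear_combination eA / 6
    have vB : B = (x * (x - 1) ^ 2 - 12 * A) / 4 := by linear_combination eB / 4
    have vC : C = A * A - A - B := by linear_combination eC
    rw [hm, hx3, hFm, vC, vB, vA, v7, v5, v4]
    field_simp
    ring
  · intro d hd
    have hcard : Fintype.card (Vd d) < 10 := by
      rw [Fintype.card_fun]
      simp only [ZMod.card, Fintype.card_fin]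
      interval_cases d <;> norm_num
    unfold Fmom
    rw [show ((Finset.univ : Finset (Vd d)).powersetCard 10) = ∅ from
      Finset.powersetCard_eq_empty.2 (by rwa [Finset.card_univ]), Finset.sum_empty]
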